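/- Let H and H' be connected graphs, and let G be obtained from H by adding, for each vertex v of H, a disjoint copy H_v of H' with every vertex of H_v joined to v by an edge. Then td(G) ≥ td(H) + td(H'). -/

import Mathlib

open Classical

variable {V : Type}

/-- Reachability within a vertex subset `s` of the graph `G`. -/
def ReachIn (G : SimpleGraph V) (s : Finset V) (u v : V) : Prop :=
  Relation.ReflTransGen (fun a b => a ∈ s ∧ b ∈ s ∧ G.Adj a b) u v

/-- The induced subgraph of `G` on `s` is (nonempty and) connected. -/
def ConnIn (G : SimpleGraph V) (s : Finset V) : Prop :=
  s.Nonempty ∧ ∀ u ∈ s, ∀ v ∈ s, ReachIn G s u v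

/-- The vertex set of the connected component of `v` in the induced subgraph on `s`. -/
noncomputable def compIn (G : SimpleGraph V) (s : Finset V) (v : V) : Finset V :=
  s.filter (fun u => ReachIn G s v u)

/-- Fuel-based recursion computing the treedepth of the induced subgraph of `G` on `s`
(correct whenever the fuel is at least `s.card`): treedepth of the null graph is `0`;
for a connected graph it is `1 + min_v td(G - v)`; otherwise the max over components. -/
noncomputable def tdAux (G : SimpleGraph V) : ℕ → Finset V → ℕ
  | 0, _ => 0
  | n+1, s =>
    if hs : s = ∅ then 0
    else if ConnIn G s then
      1 + s.inf' (Finset.nonempty_of_ne_empty hs) (fun v => tdAux G n (s.erase v))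
    else
      s.sup (fun v => tdAux G n (compIn G s v))

/-- The treedepth of the induced subgraph of `G` on the vertex set `s`. -/
noncomputable def tdOn (G : SimpleGraph V) (s : Finset V) : ℕ := tdAux G s.card s

/-- The treedepth of a finite graph. -/
noncomputable def td (G : SimpleGraph V) [Fintype V] : ℕ := tdOn G Finset.univ

/-- The graph of type `a(H, H')`: obtained from `H` by adding, for each vertex
`a` of `H`, a disjoint copy `{a} × B` of `H'` fully joined to `a`. -/
def typeA {A B : Type} (H : SimpleGraph A) (H' : SimpleGraph B) :
    SimpleGraph (A ⊕ A × B) where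
  Adj x y := match x, y with
    | Sum.inl a, Sum.inl a' => H.Adj a a'
    | Sum.inl a, Sum.inr p => a = p.1
    | Sum.inr p, Sum.inl a => p.1 = a
    | Sum.inr p, Sum.inr q => p.1 = q.1 ∧ H'.Adj p.2 q.2
  symm := by
    constructor
    rintro (a|p) (a'|q) h
    · exact H.adj_symm h
    · exact h.symm
    · exact h.symm
    · exact ⟨h.1.symm, H'.adj_symm h.2⟩
  loopless := by
    constructor
    rintro (a|p) h
    · exact H.irrefl h
    · exact H'.irrefl h.2


section Basics
variable {G : SimpleGraph V} {s : Finset V} {u v w : V}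

lemma ReachIn.symm (h : ReachIn G s u v) : ReachIn G s v u := by
  have hs : Std.Symm (fun a b : V => a ∈ s ∧ b ∈ s ∧ G.Adj a b) := by
    constructor
    rintro a b ⟨ha, hb, hab⟩
    exact ⟨hb, ha, hab.symm⟩
  exact (Relation.ReflTransGen.symmetric (r := fun a b : V => a ∈ s ∧ b ∈ s ∧ G.Adj a b)).symm _ _ h

lemma ReachIn.trans (h : ReachIn G s u v) (h' : ReachIn G s v w) : ReachIn G s u w :=
  Relation.ReflTransGen.trans h h'

lemma ReachIn.mem_right (hu : u ∈ s) (h : ReachIn G s u v) : v ∈ s := by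
  induction h with
  | refl => exact hu
  | tail _ hbc _ => exact hbc.2.1

lemma mem_compIn : u ∈ compIn G s v ↔ u ∈ s ∧ ReachIn G s v u := Finset.mem_filter

lemma compIn_subset : compIn G s v ⊆ s := Finset.filter_subset _ _

lemma self_mem_compIn (hv : v ∈ s) : v ∈ compIn G s v :=
  mem_compIn.2 ⟨hv, Relation.ReflTransGen.refl⟩

lemma reachIn_compIn (hv : v ∈ s) (h : ReachIn G s v u) : ReachIn G (compIn G s v) v u := by
  induction h with
  | refl => exact Relation.ReflTransGen.refl
  | @tail b c hb hbc ih =>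
    refine ih.tail ⟨mem_compIn.2 ⟨hbc.1, hb⟩, mem_compIn.2 ⟨hbc.2.1, hb.tail hbc⟩, hbc.2.2⟩

lemma connIn_compIn (hv : v ∈ s) : ConnIn G (compIn G s v) := by
  refine ⟨⟨v, self_mem_compIn hv⟩, fun a ha b hb => ?_⟩
  exact (reachIn_compIn hv (mem_compIn.1 ha).2).symm.trans
    (reachIn_compIn hv (mem_compIn.1 hb).2)

lemma compIn_ssubset (hns : ¬ ConnIn G s) (hne : s.Nonempty) (hv : v ∈ s) :
    compIn G s v ⊂ s := by
  rw [Finset.ssubset_iff_of_subset compIn_subset]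
  by_contra h
  push_neg at h
  refine hns ⟨hne, fun a ha b hb => ?_⟩
  have ha' := h a ha; have hb' := h b hb
  exact ((mem_compIn.1 ha').2).symm.trans (mem_compIn.1 hb').2

lemma tdAux_fuel (G : SimpleGraph V) : ∀ n (s : Finset V), s.card ≤ n →
    tdAux G n s = tdOn G s := by
  intro n
  induction n using Nat.strong_induction_on with
  | _ n IH =>
  intro s hs
  match n with
  | 0 =>
    interval_cases h : s.card
    · rw [Finset.card_eq_zero] at h; subst h; rfl
  | (n+1) =>
    rcases eq_or_ne s ∅ with rfl | hne
    · simp [tdOn, tdAux]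
    have hcard : ∃ k, s.card = k + 1 := by
      refine ⟨s.card - 1, ?_⟩
      have := Finset.card_pos.2 (Finset.nonempty_of_ne_empty hne)
      omega
    obtain ⟨k, hk⟩ := hcard
    rw [tdOn, hk]
    show tdAux G (n+1) s = tdAux G (k+1) s
    rw [tdAux, tdAux]
    simp only [hne, dite_false]
    by_cases hc : ConnIn G s
    · simp only [hc, if_true]
      congr 1
      refine Finset.inf'_congr _ rfl (fun v hv => ?_)
      have hcard : (s.erase v).card = k := by
        rw [Finset.card_erase_of_mem hv, hk]; omega
      rw [IH n (Nat.lt_succ_self n) _ (by omega),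
          IH k (by omega) _ (by omega)]
    · simp only [hc, if_false]
      refine Finset.sup_congr rfl (fun v hv => ?_)
      have hsub := compIn_ssubset hc (Finset.nonempty_of_ne_empty hne) hv
      have hcard : (compIn G s v).card < s.card := Finset.card_lt_card hsub
      rw [IH n (Nat.lt_succ_self n) _ (by omega), IH k (by omega) _ (by omega)]

lemma tdOn_empty (G : SimpleGraph V) : tdOn G (∅ : Finset V) = 0 := rfl

lemma tdOn_conn_eval (hc : ConnIn G s) :
    ∃ v ∈ s, tdOn G s = 1 + tdOn G (s.erase v) := by
  obtain ⟨k, hk⟩ : ∃ k, s.card = k + 1 := by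
    have := Finset.card_pos.2 hc.1; exact ⟨s.card - 1, by omega⟩
  have hne : s ≠ ∅ := Finset.nonempty_iff_ne_empty.1 hc.1
  obtain ⟨v, hv, hveq⟩ := Finset.exists_mem_eq_inf' (Finset.nonempty_of_ne_empty hne)
    (fun v => tdAux G k (s.erase v))
  refine ⟨v, hv, ?_⟩
  rw [tdOn, hk]
  show tdAux G (k+1) s = _
  rw [tdAux]
  simp only [hne, dite_false, hc, if_true, hveq]
  congr 1
  exact tdAux_fuel G k _ (by rw [Finset.card_erase_of_mem hv]; omega)

lemma tdOn_conn_le (hc : ConnIn G s) (hv : v ∈ s) :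
    tdOn G s ≤ 1 + tdOn G (s.erase v) := by
  obtain ⟨k, hk⟩ : ∃ k, s.card = k + 1 := by
    have := Finset.card_pos.2 hc.1; exact ⟨s.card - 1, by omega⟩
  have hne : s ≠ ∅ := Finset.nonempty_iff_ne_empty.1 hc.1
  rw [tdOn, hk]
  show tdAux G (k+1) s ≤ _
  rw [tdAux]
  simp only [hne, dite_false, hc, if_true]
  have : tdAux G k (s.erase v) = tdOn G (s.erase v) :=
    tdAux_fuel G k _ (by rw [Finset.card_erase_of_mem hv]; omega)
  calc 1 + s.inf' _ (fun v => tdAux G k (s.erase v)) ≤ 1 + tdAux G k (s.erase v) :=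
        Nat.add_le_add_left (Finset.inf'_le _ hv) 1
    _ = _ := by rw [this]

lemma tdOn_comp_le (hns : ¬ ConnIn G s) (hne : s.Nonempty) (hv : v ∈ s) :
    tdOn G (compIn G s v) ≤ tdOn G s := by
  obtain ⟨k, hk⟩ : ∃ k, s.card = k + 1 := by
    have := Finset.card_pos.2 hne; exact ⟨s.card - 1, by omega⟩
  have hne' : s ≠ ∅ := Finset.nonempty_iff_ne_empty.1 hne
  conv_rhs => rw [tdOn, hk]
  show _ ≤ tdAux G (k+1) s
  rw [tdAux]
  simp only [hne', dite_false, hns, if_false]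
  have hlt := Finset.card_lt_card (compIn_ssubset hns hne hv)
  calc tdAux G (compIn G s v).card (compIn G s v) = tdAux G k (compIn G s v) := by
        rw [tdAux_fuel G k _ (by omega)]; rfl
    _ ≤ _ := Finset.le_sup (f := fun v => tdAux G k (compIn G s v)) hv

lemma connIn_singleton (G : SimpleGraph V) (v : V) : ConnIn G {v} := by
  refine ⟨⟨v, Finset.mem_singleton_self v⟩, fun a ha b hb => ?_⟩
  rw [Finset.mem_singleton] at ha hb
  subst ha; subst hb; exact Relation.ReflTransGen.refl

lemma tdOn_singleton (G : SimpleGraph V) (v : V) : tdOn G ({v} : Finset V) = 1 := by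
  obtain ⟨w, hw, heq⟩ := tdOn_conn_eval (connIn_singleton G v)
  rw [Finset.mem_singleton] at hw; subst hw
  rw [heq, Finset.erase_singleton, tdOn_empty]

lemma tdOn_pos (G : SimpleGraph V) (s : Finset V) (hne : s.Nonempty) : 1 ≤ tdOn G s := by
  induction s using Finset.strongInduction with
  | _ s IH =>
  by_cases hc : ConnIn G s
  · obtain ⟨v, hv, heq⟩ := tdOn_conn_eval hc
    omega
  · obtain ⟨v, hv⟩ := hne
    calc 1 ≤ tdOn G (compIn G s v) :=
        IH _ (compIn_ssubset hc ⟨v, hv⟩ hv) ⟨v, self_mem_compIn hv⟩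
      _ ≤ tdOn G s := tdOn_comp_le hc ⟨v, hv⟩ hv

/-- Extract a connected subset carrying the treedepth. -/
lemma exists_conn_component (G : SimpleGraph V) (s : Finset V) (hne : s.Nonempty) :
    ∃ C ⊆ s, C.Nonempty ∧ ConnIn G C ∧ tdOn G s ≤ tdOn G C := by
  by_cases hc : ConnIn G s
  · exact ⟨s, Finset.Subset.refl s, hne, hc, le_refl _⟩
  · obtain ⟨k, hk⟩ : ∃ k, s.card = k + 1 := by
      have := Finset.card_pos.2 hne; exact ⟨s.card - 1, by omega⟩
    have hne' : s ≠ ∅ := Finset.nonempty_iff_ne_empty.1 hne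
    obtain ⟨v, hv, hveq⟩ := Finset.exists_mem_eq_sup s hne
      (fun v => tdAux G k (compIn G s v))
    refine ⟨compIn G s v, compIn_subset, ⟨v, self_mem_compIn hv⟩, connIn_compIn hv, ?_⟩
    have hlt := Finset.card_lt_card (compIn_ssubset hc hne hv)
    conv_lhs => rw [tdOn, hk]
    show tdAux G (k+1) s ≤ _
    rw [tdAux]
    simp only [hne', dite_false, hc, if_false]
    rw [hveq, tdAux_fuel G k _ (by omega)]

lemma card_erase_le_of_le {s : Finset V} {v : V} {n : ℕ} (hv : v ∈ s)
    (h : s.card ≤ n + 1) : (s.erase v).card ≤ n := by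
  rw [Finset.card_erase_of_mem hv]; omega

lemma mem_erase_of {s : Finset V} {u v : V} (h : u ≠ v) (hu : u ∈ s) : u ∈ s.erase v :=
  Finset.mem_erase.2 ⟨h, hu⟩

lemma ne_of_mem_erase' {s : Finset V} {u v : V} (h : u ∈ s.erase v) : u ≠ v ∧ u ∈ s :=
  ⟨(Finset.mem_erase.1 h).1, (Finset.mem_erase.1 h).2⟩

end Basics


section TypeA
variable {A B : Type} {H : SimpleGraph A} {H' : SimpleGraph B}

lemma typeA_adj_inl_inr (a : A) (b : B) : (typeA H H').Adj (Sum.inl a) (Sum.inr (a, b)) := rfl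

lemma reach_map_inl {A₀ : Finset A} {s : Finset (A ⊕ A × B)} {a a' : A}
    (hs : ∀ x ∈ A₀, Sum.inl x ∈ s) (h : ReachIn H A₀ a a') :
    ReachIn (typeA H H') s (Sum.inl a) (Sum.inl a') := by
  induction h with
  | refl => exact Relation.ReflTransGen.refl
  | @tail b c _ hbc ih =>
    exact ih.tail ⟨hs b hbc.1, hs c hbc.2.1, hbc.2.2⟩

lemma reach_map_inr {B₀ : Finset B} {s : Finset (A ⊕ A × B)} {a : A} {b b' : B}
    (hs : ∀ x ∈ B₀, Sum.inr (a, x) ∈ s) (h : ReachIn H' B₀ b b') :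
    ReachIn (typeA H H') s (Sum.inr (a, b)) (Sum.inr (a, b')) := by
  induction h with
  | refl => exact Relation.ReflTransGen.refl
  | @tail x y _ hxy ih =>
    exact ih.tail ⟨hs x hxy.1, hs y hxy.2.1, ⟨rfl, hxy.2.2⟩⟩

lemma connected_connIn_univ [Fintype V] {G : SimpleGraph V} (h : G.Connected) :
    ConnIn G (Finset.univ : Finset V) := by
  have : Nonempty V := h.nonempty
  refine ⟨Finset.univ_nonempty, fun u _ v _ => ?_⟩
  obtain ⟨w⟩ := h.preconnected u v
  clear * - w
  induction w with
  | nil => exact Relation.ReflTransGen.refl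
  | cons h p ih =>
    exact Relation.ReflTransGen.head ⟨Finset.mem_univ _, Finset.mem_univ _, h⟩ ih

lemma singleton_of_erase_empty {s : Finset V} {v : V} (hv : v ∈ s)
    (h : s.erase v = ∅) : s = {v} := by
  apply Finset.eq_singleton_iff_unique_mem.2
  refine ⟨hv, fun x hx => ?_⟩
  by_contra hne
  exact (Finset.notMem_empty x) (h ▸ Finset.mem_erase.2 ⟨hne, hx⟩)

lemma lemB (H : SimpleGraph A) (H' : SimpleGraph B) :
    ∀ (n : ℕ) (s : Finset (A ⊕ A × B)), s.card ≤ n → ∀ (a : A) (B₀ : Finset B),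
    (B₀ = ∅ ∨ ConnIn H' B₀) → (∀ b ∈ B₀, Sum.inr (a, b) ∈ s) →
    tdOn H' B₀ ≤ tdOn (typeA H H') s := by
  intro n
  induction n with
  | zero =>
    intro s hs a B₀ hB hBs
    rcases hB with rfl | hconn
    · exact Nat.zero_le _
    · obtain ⟨b₀, hb₀⟩ := hconn.1
      have := Finset.card_pos.2 ⟨_, hBs b₀ hb₀⟩
      omega
  | succ n IH =>
    intro s hs a B₀ hB hBs
    rcases hB with rfl | hconn
    · exact Nat.zero_le _
    obtain ⟨b₀, hb₀⟩ := hconn.1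
    have hsne : s.Nonempty := ⟨_, hBs b₀ hb₀⟩
    by_cases hcG : ConnIn (typeA H H') s
    · obtain ⟨v, hv, heq⟩ := tdOn_conn_eval hcG
      rw [heq]
      by_cases hvB : ∃ b ∈ B₀, v = Sum.inr (a, b)
      · obtain ⟨b, hbB, rfl⟩ := hvB
        by_cases hE : B₀.erase b = ∅
        · rw [singleton_of_erase_empty hbB hE, tdOn_singleton]
          have := tdOn_pos (typeA H H') s hsne
          omega
        · obtain ⟨C, hCsub, hCne, hCconn, hCtd⟩ :=
            exists_conn_component H' (B₀.erase b) (Finset.nonempty_of_ne_empty hE)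
          refine le_trans (tdOn_conn_le hconn hbB)
            (Nat.add_le_add_left (le_trans hCtd
              (IH _ (card_erase_le_of_le hv hs) a C
                (Or.inr hCconn) (fun x hx => ?_))) 1)
          have hx' := ne_of_mem_erase' (hCsub hx)
          exact mem_erase_of (by simp [hx'.1]) (hBs x hx'.2)
      · push_neg at hvB
        refine le_trans
          (IH _ (card_erase_le_of_le hv hs) a B₀
            (Or.inr hconn) (fun x hx => ?_)) (Nat.le_add_left _ 1)
        exact mem_erase_of (fun h => hvB x hx h.symm) (hBs x hx)
    · have hmem : ∀ b ∈ B₀, Sum.inr (a, b) ∈ compIn (typeA H H') s (Sum.inr (a, b₀)) := by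
        intro b hb
        exact mem_compIn.2 ⟨hBs b hb, reach_map_inr hBs (hconn.2 b₀ hb₀ b hb)⟩
      have hcard : (compIn (typeA H H') s (Sum.inr (a, b₀))).card ≤ n := by
        have := Finset.card_lt_card (compIn_ssubset hcG hsne (hBs b₀ hb₀))
        omega
      exact le_trans (IH _ hcard a B₀ (Or.inr hconn) hmem)
        (tdOn_comp_le hcG hsne (hBs b₀ hb₀))

lemma mainLem (H : SimpleGraph A) (H' : SimpleGraph B) :
    ∀ (n : ℕ) (s : Finset (A ⊕ A × B)), s.card ≤ n →
    ∀ (A₀ : Finset A) (Bf : A → Finset B) (m : ℕ),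
    ConnIn H A₀ → (∀ a ∈ A₀, Sum.inl a ∈ s) →
    (∀ a ∈ A₀, Bf a = ∅ ∨ ConnIn H' (Bf a)) →
    (∀ a ∈ A₀, ∀ b ∈ Bf a, Sum.inr (a, b) ∈ s) →
    (∀ a ∈ A₀, m ≤ tdOn H' (Bf a)) →
    tdOn H A₀ + m ≤ tdOn (typeA H H') s := by
  intro n
  induction n with
  | zero =>
    intro s hs A₀ Bf m hA hAs hB hBs hm
    obtain ⟨a₀, ha₀⟩ := hA.1
    have := Finset.card_pos.2 ⟨_, hAs a₀ ha₀⟩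
    omega
  | succ n IH =>
    intro s hs A₀ Bf m hA hAs hB hBs hm
    obtain ⟨a₀, ha₀⟩ := hA.1
    have hsne : s.Nonempty := ⟨_, hAs a₀ ha₀⟩
    by_cases hcG : ConnIn (typeA H H') s
    · obtain ⟨v, hv, heq⟩ := tdOn_conn_eval hcG
      rw [heq]
      rcases v with a | ⟨a, b⟩
      -- removed vertex is `inl a`
      · by_cases haA : a ∈ A₀
        · by_cases hE : A₀.erase a = ∅
          · -- A₀ = {a}
            rw [singleton_of_erase_empty haA hE, tdOn_singleton]
            have hm' : m ≤ tdOn H' (Bf a) := hm a haA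
            refine Nat.add_le_add_left (le_trans hm'
              (lemB H H' n _ (card_erase_le_of_le hv hs) a (Bf a) (hB a haA)
                (fun b hb => ?_))) 1
            exact mem_erase_of (by simp) (hBs a haA b hb)
          · obtain ⟨C, hCsub, hCne, hCconn, hCtd⟩ :=
              exists_conn_component H (A₀.erase a) (Finset.nonempty_of_ne_empty hE)
            have h1 : tdOn H A₀ ≤ 1 + tdOn H (A₀.erase a) := tdOn_conn_le hA haA
            refine le_trans (show tdOn H A₀ + m ≤ 1 + (tdOn H C + m) by omega)
              (Nat.add_le_add_left
                (IH _ (card_erase_le_of_le hv hs) C Bf m hCconn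
                  (fun x hx => ?_) (fun x hx => hB x ((ne_of_mem_erase' (hCsub hx)).2))
                  (fun x hx b hb => ?_)
                  (fun x hx => hm x ((ne_of_mem_erase' (hCsub hx)).2))) 1)
            · have hx' := ne_of_mem_erase' (hCsub hx)
              exact mem_erase_of (by simp [hx'.1]) (hAs x hx'.2)
            · have hx' := ne_of_mem_erase' (hCsub hx)
              exact mem_erase_of (by simp) (hBs x hx'.2 b hb)
        · refine le_trans
            (IH _ (card_erase_le_of_le hv hs) A₀ Bf m hA
              (fun x hx => mem_erase_of (by simp; rintro rfl; exact haA hx) (hAs x hx))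
              hB (fun x hx b hb => mem_erase_of (by simp) (hBs x hx b hb)) hm)
            (Nat.le_add_left _ 1)
      -- removed vertex is `inr (a, b)`
      · by_cases hab : a ∈ A₀ ∧ b ∈ Bf a
        · obtain ⟨haA, hbB⟩ := hab
          have hBconn : ConnIn H' (Bf a) := by
            rcases hB a haA with h | h
            · rw [h] at hbB; exact absurd hbB (Finset.notMem_empty b)
            · exact h
          by_cases hE : (Bf a).erase b = ∅
          · -- Bf a = {b}
            have hBa : Bf a = {b} := singleton_of_erase_empty hbB hE
            have hm1 : m ≤ 1 := by
              have := hm a haA; rw [hBa, tdOn_singleton] at this; omega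
            set Bf' : A → Finset B := fun x => if x = a then (∅ : Finset B) else Bf x with hBf'
            have hIH : tdOn H A₀ + (m - 1) ≤ tdOn (typeA H H') _ :=
              IH _ (card_erase_le_of_le hv hs) A₀ Bf' (m - 1) hA
                (fun x hx => mem_erase_of (by simp) (hAs x hx))
                (fun x hx => by
                  by_cases hxa : x = a
                  · simp [hBf', hxa]
                  · simpa [hBf', hxa] using hB x hx)
                (fun x hx b' hb' => by
                  by_cases hxa : x = a
                  · simp [hBf', hxa] at hb'
                  · refine mem_erase_of (by simp [hxa]) ?_
                    simp [hBf', hxa] at hb'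
                    exact hBs x hx b' hb')
                (fun x hx => by
                  by_cases hxa : x = a
                  · simp [hBf', hxa]; omega
                  · simp only [hBf', hxa, if_false]
                    exact le_trans (by omega) (hm x hx))
            omega
          · obtain ⟨C, hCsub, hCne, hCconn, hCtd⟩ :=
              exists_conn_component H' ((Bf a).erase b) (Finset.nonempty_of_ne_empty hE)
            have h1 : tdOn H' (Bf a) ≤ 1 + tdOn H' ((Bf a).erase b) := tdOn_conn_le hBconn hbB
            set Bf' : A → Finset B := fun x => if x = a then C else Bf x with hBf'
            have hIH : tdOn H A₀ + (m - 1) ≤ tdOn (typeA H H') _ :=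
              IH _ (card_erase_le_of_le hv hs) A₀ Bf' (m - 1) hA
                (fun x hx => mem_erase_of (by simp) (hAs x hx))
                (fun x hx => by
                  by_cases hxa : x = a
                  · simp only [hBf', hxa, if_true]; exact Or.inr hCconn
                  · simpa [hBf', hxa] using hB x hx)
                (fun x hx b' hb' => by
                  by_cases hxa : x = a
                  · subst hxa
                    simp only [hBf', if_true] at hb'
                    have hb'' := ne_of_mem_erase' (hCsub hb')
                    exact mem_erase_of (by simp [hb''.1]) (hBs x hx b' hb''.2)
                  · simp only [hBf', hxa, if_false] at hb'
                    exact mem_erase_of (by simp [hxa]) (hBs x hx b' hb'))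
                (fun x hx => by
                  by_cases hxa : x = a
                  · simp only [hBf', hxa, if_true]
                    have := hm a haA
                    omega
                  · simp only [hBf', hxa, if_false]
                    exact le_trans (by omega) (hm x hx))
            omega
        · refine le_trans
            (IH _ (card_erase_le_of_le hv hs) A₀ Bf m hA
              (fun x hx => mem_erase_of (by simp) (hAs x hx))
              hB
              (fun x hx b' hb' => mem_erase_of ?_ (hBs x hx b' hb')) hm)
            (Nat.le_add_left _ 1)
          simp only [ne_eq, Sum.inr.injEq, Prod.mk.injEq, not_and]
          rintro rfl rfl
          exact hab ⟨hx, hb'⟩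
    · -- disconnected case
      have hreach : ∀ a ∈ A₀, ReachIn (typeA H H') s (Sum.inl a₀) (Sum.inl a) :=
        fun a ha => reach_map_inl hAs (hA.2 a₀ ha₀ a ha)
      have hmemA : ∀ a ∈ A₀, Sum.inl a ∈ compIn (typeA H H') s (Sum.inl a₀) :=
        fun a ha => mem_compIn.2 ⟨hAs a ha, hreach a ha⟩
      have hmemB : ∀ a ∈ A₀, ∀ b ∈ Bf a,
          Sum.inr (a, b) ∈ compIn (typeA H H') s (Sum.inl a₀) := by
        intro a ha b hb
        exact mem_compIn.2 ⟨hBs a ha b hb,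
          (hreach a ha).tail ⟨hAs a ha, hBs a ha b hb, rfl⟩⟩
      have hcard : (compIn (typeA H H') s (Sum.inl a₀)).card ≤ n := by
        have := Finset.card_lt_card (compIn_ssubset hcG hsne (hAs a₀ ha₀))
        omega
      exact le_trans (IH _ hcard A₀ Bf m hA hmemA hB hmemB hm)
        (tdOn_comp_le hcG hsne (hAs a₀ ha₀))

end TypeA

theorem td_typeA {A B : Type} [Fintype A] [Fintype B]
    (H : SimpleGraph A) (H' : SimpleGraph B) (hH : H.Connected) (hH' : H'.Connected) :
    td H + td H' ≤ td (typeA H H') := by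
  have hA : ConnIn H (Finset.univ : Finset A) := connected_connIn_univ hH
  have hB : ConnIn H' (Finset.univ : Finset B) := connected_connIn_univ hH'
  exact mainLem H H' (Finset.univ : Finset (A ⊕ A × B)).card Finset.univ le_rfl
    Finset.univ (fun _ => Finset.univ) (td H') hA
    (fun _ _ => Finset.mem_univ _) (fun _ _ => Or.inr hB)
    (fun _ _ _ _ => Finset.mem_univ _) (fun _ _ => le_rfl)
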